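/- arXiv:2309.16565 — 4 statements merged into one kernel-verified Lean document; each statement's English description precedes it below -/
import Mathlib

section
/- Let G be a graph of order n ≥ 2 and orient each edge of G independently with probability 1/2 in each direction. If ℓ ≥ 5·log₂ n, then the probability that some subgraph of G isomorphic to K_{ℓ,ℓ} is acyclic in the resulting random orientation is less than 1/2. -/
def HasDicycleOn {V : Type*} (r : V → V → Prop) (S : Set V) : Prop :=
  ∃ (m : ℕ) (f : ZMod (m + 1) → V), Function.Injective f ∧
    (∀ i, f i ∈ S) ∧ ∀ i, r (f i) (f (i + 1))

def IsAcyclicOn {V : Type*} (r : V → V → Prop) (S : Set V) : Prop :=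
  ¬ HasDicycleOn r S

/-- The orientation of `G` determined by a family of coin flips `ω`: the edge `{u,v}`
(with `u < v`) is oriented from `u` to `v` iff `ω (u, v) = true`. -/
def coinOrientation {n : ℕ} (G : SimpleGraph (Fin n)) (ω : Fin n × Fin n → Bool)
    (u v : Fin n) : Prop :=
  G.Adj u v ∧ ((u < v ∧ ω (u, v) = true) ∨ (v < u ∧ ω (v, u) = false))

/-- The event that some copy of `K_{ℓ,ℓ}` in `G` is acyclic under the orientation
determined by `ω`. -/
def ExistsAcyclicKll {n : ℕ} (G : SimpleGraph (Fin n)) (ℓ : ℕ)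
    (ω : Fin n × Fin n → Bool) : Prop :=
  ∃ S T : Finset (Fin n), S.card = ℓ ∧ T.card = ℓ ∧ Disjoint S T ∧
    (∀ u ∈ S, ∀ v ∈ T, G.Adj u v) ∧
    IsAcyclicOn (fun x y => coinOrientation G ω x y ∧
      ((x ∈ S ∧ y ∈ T) ∨ (x ∈ T ∧ y ∈ S))) Set.univ

/-- A closed walk of positive length yields a directed cycle. -/
private lemma closedWalk_hasDicycle {V : Type*} {r : V → V → Prop} :
    ∀ m : ℕ, 1 ≤ m → ∀ f : ℕ → V, (∀ i < m, r (f i) (f (i + 1))) → f 0 = f m →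
      HasDicycleOn r Set.univ := by
  intro m
  induction m using Nat.strong_induction_on with
  | _ m ih =>
    intro hm f hf hcl
    by_cases hrep : ∃ i j, i < j ∧ j ≤ m ∧ (i ≠ 0 ∨ j ≠ m) ∧ f i = f j
    · obtain ⟨i, j, hij, hjm, hne, hfe⟩ := hrep
      refine ih (j - i) (by omega) (by omega) (fun k => f (i + k)) ?_ ?_
      · intro k hk
        have h1 := hf (i + k) (by omega)
        simpa [Nat.add_assoc] using h1
      · show f (i + 0) = f (i + (j - i))
        have h0 : i + 0 = i := by omega
        have h1 : i + (j - i) = j := by omega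
        rw [h0, h1]; exact hfe
    · push_neg at hrep
      obtain ⟨k, rfl⟩ : ∃ k, m = k + 1 := ⟨m - 1, by omega⟩
      refine ⟨k, fun z => f z.val, ?_, fun _ => Set.mem_univ _, ?_⟩
      · intro z1 z2 hz
        by_contra hne2
        have hv : z1.val ≠ z2.val := by
          intro h
          apply hne2
          have e1 : ((z1.val : ℕ) : ZMod (k + 1)) = z1 := ZMod.natCast_rightInverse z1
          have e2 : ((z2.val : ℕ) : ZMod (k + 1)) = z2 := ZMod.natCast_rightInverse z2
          rw [← e1, ← e2, h]
        rcases Nat.lt_or_ge z1.val z2.val with h | h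
        · exact hrep z1.val z2.val h (by have := ZMod.val_lt z2; omega)
            (Or.inr (by have := ZMod.val_lt z2; omega)) hz
        · have h' : z2.val < z1.val := by omega
          exact hrep z2.val z1.val h' (by have := ZMod.val_lt z1; omega)
            (Or.inr (by have := ZMod.val_lt z1; omega)) hz.symm
      · intro z
        have hz1 : z + 1 = ((z.val + 1 : ℕ) : ZMod (k + 1)) := by
          have hzz := (ZMod.natCast_rightInverse z : ((z.val : ℕ) : ZMod (k + 1)) = z)
          rw [Nat.cast_add, Nat.cast_one, hzz]
        have hval : (z + 1).val = (z.val + 1) % (k + 1) := by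
          rw [hz1, ZMod.val_natCast]
        show r (f z.val) (f (z + 1).val)
        by_cases hzk : z.val = k
        · have h0 : (z + 1).val = 0 := by rw [hval, hzk]; simp
          rw [h0, hzk, hcl]
          exact hf k (by omega)
        · have hlt : z.val < k := by have := ZMod.val_lt z; omega
          have h1 : (z + 1).val = z.val + 1 := by
            rw [hval]; exact Nat.mod_eq_of_lt (by omega)
          rw [h1]
          exact hf z.val (by omega)

private lemma transGen_walk {V : Type*} {r : V → V → Prop} {a b : V}
    (h : Relation.TransGen r a b) :
    ∃ (m : ℕ) (f : ℕ → V), 1 ≤ m ∧ f 0 = a ∧ f m = b ∧ ∀ i < m, r (f i) (f (i + 1)) := by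
  induction h with
  | @single c hab =>
    refine ⟨1, fun i => if i = 0 then a else c, le_refl 1, by simp, by simp, ?_⟩
    intro i hi
    have hi0 : i = 0 := by omega
    subst hi0
    simpa using hab
  | @tail b' c _ hbc ih =>
    obtain ⟨m, f, hm, h0, hmb, hf⟩ := ih
    refine ⟨m + 1, fun i => if i ≤ m then f i else c, by omega, ?_, ?_, ?_⟩
    · simpa using h0
    · simp
    · intro i hi
      show r (if i ≤ m then f i else c) (if i + 1 ≤ m then f (i + 1) else c)
      rcases Nat.lt_or_ge i m with h | h
      · rw [if_pos (by omega : i ≤ m), if_pos (by omega : i + 1 ≤ m)]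
        exact hf i h
      · have him : i = m := by omega
        subst him
        rw [if_pos (le_refl i), if_neg (by omega : ¬ i + 1 ≤ i), hmb]
        exact hbc

private lemma hasDicycle_of_transGen {V : Type*} {r : V → V → Prop} {a : V}
    (h : Relation.TransGen r a a) : HasDicycleOn r Set.univ := by
  obtain ⟨m, f, hm, h0, hma, hf⟩ := transGen_walk h
  exact closedWalk_hasDicycle m hm f hf (h0.trans hma.symm)

open Classical in
/-- Rank of a vertex: the number of vertices from which it is reachable. -/
private noncomputable def rnkFun {n : ℕ} (r : Fin n → Fin n → Prop) (v : Fin n) : ℕ :=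
  (Finset.univ.filter fun u => Relation.TransGen r u v).card

private lemma rnkFun_lt {n : ℕ} {r : Fin n → Fin n → Prop}
    (hac : IsAcyclicOn r Set.univ) (v : Fin n) : rnkFun r v < n := by
  classical
  unfold rnkFun
  have hv : v ∉ (Finset.univ.filter fun u => Relation.TransGen r u v) := by
    simp only [Finset.mem_filter, Finset.mem_univ, true_and]
    intro hvv
    exact hac (hasDicycle_of_transGen hvv)
  have hsub : (Finset.univ.filter fun u => Relation.TransGen r u v) ⊆ Finset.univ.erase v :=
    fun u hu => Finset.mem_erase.mpr ⟨fun h => hv (h ▸ hu), Finset.mem_univ u⟩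
  calc (Finset.univ.filter fun u => Relation.TransGen r u v).card
      ≤ (Finset.univ.erase v).card := Finset.card_le_card hsub
    _ < n := by
        rw [Finset.card_erase_of_mem (Finset.mem_univ v), Finset.card_univ, Fintype.card_fin]
        have : 0 < n := v.pos
        omega

private lemma rnkFun_mono {n : ℕ} {r : Fin n → Fin n → Prop}
    (hac : IsAcyclicOn r Set.univ) {a b : Fin n} (hab : r a b) :
    rnkFun r a < rnkFun r b := by
  classical
  unfold rnkFun
  apply Finset.card_lt_card
  have hsub : (Finset.univ.filter fun u => Relation.TransGen r u a)
      ⊆ (Finset.univ.filter fun u => Relation.TransGen r u b) := by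
    intro u hu
    simp only [Finset.mem_filter, Finset.mem_univ, true_and] at hu ⊢
    exact hu.tail hab
  rw [Finset.ssubset_iff_of_subset hsub]
  refine ⟨a, ?_, ?_⟩
  · simp only [Finset.mem_filter, Finset.mem_univ, true_and]
    exact Relation.TransGen.single hab
  · simp only [Finset.mem_filter, Finset.mem_univ, true_and]
    intro haa
    exact hac (hasDicycle_of_transGen haa)

private lemma perPair {n ℓ : ℕ} (G : SimpleGraph (Fin n)) (S T : Finset (Fin n)) :
    Nat.card {ω : Fin n × Fin n → Bool // S.card = ℓ ∧ T.card = ℓ ∧ Disjoint S T ∧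
      (∀ u ∈ S, ∀ v ∈ T, G.Adj u v) ∧
      IsAcyclicOn (fun x y => coinOrientation G ω x y ∧
        ((x ∈ S ∧ y ∈ T) ∨ (x ∈ T ∧ y ∈ S))) Set.univ} ≤
      n ^ (2 * ℓ) * 2 ^ (n * n - ℓ * ℓ) := by
  classical
  set P : (Fin n × Fin n → Bool) → Prop := fun ω =>
    S.card = ℓ ∧ T.card = ℓ ∧ Disjoint S T ∧
      (∀ u ∈ S, ∀ v ∈ T, G.Adj u v) ∧
      IsAcyclicOn (fun x y => coinOrientation G ω x y ∧
        ((x ∈ S ∧ y ∈ T) ∨ (x ∈ T ∧ y ∈ S))) Set.univ with hP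
  by_cases hne : Nonempty {ω // P ω}
  swap
  · have : IsEmpty {ω // P ω} := not_nonempty_iff.mp hne
    rw [Nat.card_of_isEmpty]
    exact Nat.zero_le _
  obtain ⟨⟨ω₀, hS, hT, hdisj, hadj, -⟩⟩ := hne
  -- in particular n > 0 unless ℓ = 0 ... we handle n = 0 separately
  rcases Nat.eq_zero_or_pos n with hn0 | hn
  · subst hn0
    -- Fin 0 is empty; the function space is a singleton, card ≤ anything ≥ 1
    have hℓ0 : ℓ = 0 := by
      rw [← hS]
      have : S = ∅ := Finset.eq_empty_of_forall_notMem (fun x _ => x.elim0)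
      simp [this]
    subst hℓ0
    simp only [Nat.mul_zero, Nat.zero_mul, pow_zero, Nat.sub_zero, one_mul]
    have : Nat.card {ω // P ω} ≤ Nat.card (Fin 0 × Fin 0 → Bool) :=
      Nat.card_le_card_of_injective Subtype.val Subtype.val_injective
    calc Nat.card {ω // P ω} ≤ Nat.card (Fin 0 × Fin 0 → Bool) := this
      _ = 1 := by
          rw [Nat.card_eq_fintype_card, Fintype.card_fun]
          simp
      _ ≤ 2 ^ (0 * 0) := by norm_num
  set K : Finset (Fin n × Fin n) :=
    Finset.univ.filter fun p => p.1 < p.2 ∧ ((p.1 ∈ S ∧ p.2 ∈ T) ∨ (p.1 ∈ T ∧ p.2 ∈ S))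
    with hKdef
  have hKcard : ℓ * ℓ ≤ K.card := by
    have h1 : (S ×ˢ T).card = ℓ * ℓ := by rw [Finset.card_product, hS, hT]
    rw [← h1]
    apply Finset.card_le_card_of_injOn (fun p => if p.1 < p.2 then p else p.swap)
    · rintro ⟨u, v⟩ huv
      rw [Finset.mem_coe, Finset.mem_product] at huv
      have hne' : u ≠ v := fun h => Finset.disjoint_left.mp hdisj huv.1 (h ▸ huv.2)
      rcases lt_or_gt_of_ne hne' with h | h
      · simp only [if_pos h]
        exact Finset.mem_filter.mpr ⟨Finset.mem_univ _, h, Or.inl ⟨huv.1, huv.2⟩⟩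
      · simp only [if_neg (asymm h)]
        exact Finset.mem_filter.mpr ⟨Finset.mem_univ _, h, Or.inr ⟨huv.2, huv.1⟩⟩
    · rintro ⟨u, v⟩ hu ⟨u', v'⟩ hu' h
      simp only [Finset.coe_product, Set.mem_prod] at hu hu'
      have hne1 : u ≠ v := fun hh => Finset.disjoint_left.mp hdisj hu.1 (hh ▸ hu.2)
      have hne2 : u' ≠ v' := fun hh => Finset.disjoint_left.mp hdisj hu'.1 (hh ▸ hu'.2)
      by_cases h1 : u < v <;> by_cases h2 : u' < v' <;>
        simp only [if_pos, if_neg, h1, h2, ite_true, ite_false, Prod.swap_prod_mk,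
          Prod.mk.injEq] at h
      · exact Prod.ext h.1 h.2
      · exfalso
        exact Finset.disjoint_left.mp hdisj hu.1 (h.1 ▸ hu'.2)
      · exfalso
        exact Finset.disjoint_left.mp hdisj hu'.1 (h.1.symm ▸ hu.2)
      · exact Prod.ext h.2 h.1
  -- the injection
  have hF : ∃ F : {ω // P ω} →
      ((↥(S ∪ T) → Fin n) × ({p : Fin n × Fin n // p ∉ K} → Bool)),
      Function.Injective F := by
    refine ⟨fun x =>
      ⟨fun v => ⟨rnkFun (fun a b => coinOrientation G x.val a b ∧
          ((a ∈ S ∧ b ∈ T) ∨ (a ∈ T ∧ b ∈ S))) v.val,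
        rnkFun_lt x.prop.2.2.2.2 v.val⟩,
       fun p => x.val p.val⟩, ?_⟩
    rintro ⟨ω, hω⟩ ⟨ω', hω'⟩ heq
    rw [Prod.mk.injEq] at heq
    obtain ⟨h1, h2⟩ := heq
    apply Subtype.ext
    funext p
    show ω p = ω' p
    by_cases hpK : p ∈ K
    · obtain ⟨-, hlt, hsides⟩ := Finset.mem_filter.mp hpK
      have hmem1 : p.1 ∈ S ∪ T := by
        rcases hsides with ⟨h, -⟩ | ⟨h, -⟩ <;> simp [Finset.mem_union, h]
      have hmem2 : p.2 ∈ S ∪ T := by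
        rcases hsides with ⟨-, h⟩ | ⟨-, h⟩ <;> simp [Finset.mem_union, h]
      have hadj' : G.Adj p.1 p.2 := by
        rcases hsides with ⟨ha, hb⟩ | ⟨ha, hb⟩
        · exact hadj _ ha _ hb
        · exact (hadj _ hb _ ha).symm
      have hsides' : (p.2 ∈ S ∧ p.1 ∈ T) ∨ (p.2 ∈ T ∧ p.1 ∈ S) := by tauto
      have hr1 := congrArg (fun g => (g ⟨p.1, hmem1⟩ : Fin n).val) h1
      have hr2 := congrArg (fun g => (g ⟨p.2, hmem2⟩ : Fin n).val) h1
      simp only at hr1 hr2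
      -- key facts about individual orientations
      have key : ∀ (σ : Fin n × Fin n → Bool), IsAcyclicOn (fun a b =>
          coinOrientation G σ a b ∧ ((a ∈ S ∧ b ∈ T) ∨ (a ∈ T ∧ b ∈ S))) Set.univ →
          (σ (p.1, p.2) = true →
            rnkFun (fun a b => coinOrientation G σ a b ∧
              ((a ∈ S ∧ b ∈ T) ∨ (a ∈ T ∧ b ∈ S))) p.1 <
            rnkFun (fun a b => coinOrientation G σ a b ∧
              ((a ∈ S ∧ b ∈ T) ∨ (a ∈ T ∧ b ∈ S))) p.2) ∧
          (σ (p.1, p.2) = false →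
            rnkFun (fun a b => coinOrientation G σ a b ∧
              ((a ∈ S ∧ b ∈ T) ∨ (a ∈ T ∧ b ∈ S))) p.2 <
            rnkFun (fun a b => coinOrientation G σ a b ∧
              ((a ∈ S ∧ b ∈ T) ∨ (a ∈ T ∧ b ∈ S))) p.1) := by
        intro σ hac
        constructor
        · intro htrue
          exact rnkFun_mono hac ⟨⟨hadj', Or.inl ⟨hlt, htrue⟩⟩, hsides⟩
        · intro hfalse
          exact rnkFun_mono hac ⟨⟨hadj'.symm, Or.inr ⟨hlt, hfalse⟩⟩, hsides'⟩
      have hωval : ω p = ω (p.1, p.2) := by rw [Prod.mk.eta]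
      have hω'val : ω' p = ω' (p.1, p.2) := by rw [Prod.mk.eta]
      rw [hωval, hω'val]
      cases hb : ω (p.1, p.2) <;> cases hb' : ω' (p.1, p.2)
      · rfl
      · exfalso
        have l1 := (key ω hω.2.2.2.2).2 hb
        have l2 := (key ω' hω'.2.2.2.2).1 hb'
        omega
      · exfalso
        have l1 := (key ω hω.2.2.2.2).1 hb
        have l2 := (key ω' hω'.2.2.2.2).2 hb'
        omega
      · rfl
    · exact congrFun h2 ⟨p, hpK⟩
  obtain ⟨F, hFinj⟩ := hF
  have hle := Nat.card_le_card_of_injective F hFinj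
  have hcod : Nat.card ((↥(S ∪ T) → Fin n) × ({p : Fin n × Fin n // p ∉ K} → Bool))
      = n ^ (2 * ℓ) * 2 ^ (n * n - K.card) := by
    rw [Nat.card_prod, Nat.card_eq_fintype_card, Nat.card_eq_fintype_card,
      Fintype.card_fun, Fintype.card_fun]
    congr 1
    · rw [Fintype.card_fin, Fintype.card_coe, Finset.card_union_of_disjoint hdisj, hS, hT]
      congr 1
      omega
    · rw [Fintype.card_bool]
      congr 1
      rw [Fintype.card_subtype]
      have hceq : Finset.univ.filter (fun p => p ∉ K) = Kᶜ := by
        ext p; simp [Finset.mem_compl]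
      rw [hceq, Finset.card_compl, Fintype.card_prod, Fintype.card_fin]
  calc Nat.card {ω // P ω}
      ≤ n ^ (2 * ℓ) * 2 ^ (n * n - K.card) := by rw [← hcod]; exact hle
    _ ≤ n ^ (2 * ℓ) * 2 ^ (n * n - ℓ * ℓ) := by
        apply Nat.mul_le_mul_left
        exact Nat.pow_le_pow_right (by omega) (Nat.sub_le_sub_left hKcard _)

/-- If `ℓ ≥ 5 log₂ n` then, for a uniformly random orientation of a graph `G` of order
`n ≥ 2`, the probability that some subgraph of `G` isomorphic to `K_{ℓ,ℓ}` is acyclic is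
less than `1/2`. -/
theorem prob_acyclic_Kll_lt_half (n ℓ : ℕ) (hn : 2 ≤ n) (G : SimpleGraph (Fin n))
    (hℓ : 5 * Real.logb 2 n ≤ ℓ) :
    (Nat.card {ω : Fin n × Fin n → Bool // ExistsAcyclicKll G ℓ ω} : ℝ) <
      (Nat.card (Fin n × Fin n → Bool) : ℝ) / 2 := by
  classical
  have hΩ : Nat.card (Fin n × Fin n → Bool) = 2 ^ (n * n) := by
    rw [Nat.card_eq_fintype_card, Fintype.card_fun, Fintype.card_bool,
      Fintype.card_prod, Fintype.card_fin]
  have hnR : (2 : ℝ) ≤ (n : ℝ) := by exact_mod_cast hn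
  have hn0R : (0 : ℝ) < (n : ℝ) := by linarith
  have hlogb1 : (1 : ℝ) ≤ Real.logb 2 n := by
    rw [Real.le_logb_iff_rpow_le (by norm_num) hn0R]
    simpa using hnR
  have hl5 : 5 ≤ ℓ := by
    have h5 : (5 : ℝ) ≤ (ℓ : ℝ) := le_trans (by linarith) hℓ
    exact_mod_cast h5
  have hn5 : n ^ 5 ≤ 2 ^ ℓ := by
    have h1 : Real.logb 2 ((n : ℝ) ^ (5 : ℕ)) ≤ (ℓ : ℝ) := by
      rw [Real.logb_pow]
      push_cast
      linarith
    have h2 : ((n : ℝ) ^ (5 : ℕ)) ≤ (2 : ℝ) ^ ((ℓ : ℕ) : ℝ) :=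
      (Real.logb_le_iff_le_rpow (by norm_num) (pow_pos hn0R 5)).mp h1
    rw [Real.rpow_natCast] at h2
    exact_mod_cast h2
  by_cases hln : ℓ ≤ n
  swap
  · have hE : IsEmpty {ω : Fin n × Fin n → Bool // ExistsAcyclicKll G ℓ ω} := by
      constructor
      rintro ⟨ω, S, T, hS, hT, -⟩
      apply hln
      rw [← hS]
      calc S.card ≤ (Finset.univ : Finset (Fin n)).card := Finset.card_le_univ S
        _ = n := by rw [Finset.card_univ, Fintype.card_fin]
    rw [Nat.card_of_isEmpty, hΩ]
    push_cast
    positivity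
  -- main case
  have key : Nat.card {ω : Fin n × Fin n → Bool // ExistsAcyclicKll G ℓ ω}
      ≤ 2 ^ (n * n - 2) := by
    set P : Finset (Fin n) × Finset (Fin n) → (Fin n × Fin n → Bool) → Prop :=
      fun p ω => p.1.card = ℓ ∧ p.2.card = ℓ ∧ Disjoint p.1 p.2 ∧
        (∀ u ∈ p.1, ∀ v ∈ p.2, G.Adj u v) ∧
        IsAcyclicOn (fun x y => coinOrientation G ω x y ∧
          ((x ∈ p.1 ∧ y ∈ p.2) ∨ (x ∈ p.2 ∧ y ∈ p.1))) Set.univ with hPdef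
    set A : Finset (Fin n × Fin n → Bool) := Finset.univ.filter (ExistsAcyclicKll G ℓ) with hAdef
    set Ap : Finset (Fin n) × Finset (Fin n) → Finset (Fin n × Fin n → Bool) :=
      fun p => Finset.univ.filter (P p) with hApdef
    have hA : Nat.card {ω : Fin n × Fin n → Bool // ExistsAcyclicKll G ℓ ω} = A.card := by
      rw [Nat.card_eq_fintype_card, Fintype.card_subtype]
    have hsub : A ⊆ Finset.univ.biUnion Ap := by
      intro ω hω
      rw [hAdef, Finset.mem_filter] at hω
      obtain ⟨-, S, T, hS, hT, hdisj, hadj, hac⟩ := hω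
      apply Finset.mem_biUnion.mpr
      exact ⟨(S, T), Finset.mem_univ _,
        Finset.mem_filter.mpr ⟨Finset.mem_univ _, hS, hT, hdisj, hadj, hac⟩⟩
    have step1 : A.card ≤ ∑ p : Finset (Fin n) × Finset (Fin n), (Ap p).card :=
      (Finset.card_le_card hsub).trans Finset.card_biUnion_le
    set Vld : Finset (Finset (Fin n) × Finset (Fin n)) :=
      Finset.univ.filter (fun p => p.1.card = ℓ ∧ p.2.card = ℓ) with hVdef
    have step2 : ∑ p : Finset (Fin n) × Finset (Fin n), (Ap p).card
        = ∑ p ∈ Vld, (Ap p).card := by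
      refine (Finset.sum_subset (Finset.filter_subset _ _) ?_).symm
      intro p _ hp
      simp only [Finset.mem_filter] at hp
      rw [Finset.card_eq_zero, hApdef]
      rw [Finset.filter_eq_empty_iff]
      intro ω _
      rintro ⟨h1, h2, -⟩
      exact hp ⟨Finset.mem_univ _, h1, h2⟩
    have hAple : ∀ p : Finset (Fin n) × Finset (Fin n),
        (Ap p).card ≤ n ^ (2 * ℓ) * 2 ^ (n * n - ℓ * ℓ) := by
      intro p
      have : (Ap p).card = Nat.card {ω : Fin n × Fin n → Bool // P p ω} := by
        rw [Nat.card_eq_fintype_card, Fintype.card_subtype]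
      rw [this]
      exact perPair G p.1 p.2
    have step3 : ∑ p ∈ Vld, (Ap p).card ≤ Vld.card * (n ^ (2 * ℓ) * 2 ^ (n * n - ℓ * ℓ)) := by
      have := Finset.sum_le_card_nsmul Vld (fun p => (Ap p).card)
        (n ^ (2 * ℓ) * 2 ^ (n * n - ℓ * ℓ)) (fun p _ => hAple p)
      simpa [smul_eq_mul] using this
    have hVcard : Vld.card ≤ n ^ ℓ * n ^ ℓ := by
      have hv1 : Vld = (Finset.univ.filter (fun s : Finset (Fin n) => s.card = ℓ)) ×ˢ
          (Finset.univ.filter (fun s : Finset (Fin n) => s.card = ℓ)) := by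
        rw [hVdef]
        ext q
        simp [Finset.mem_filter, Finset.mem_product]
      have hv2 : (Finset.univ.filter (fun s : Finset (Fin n) => s.card = ℓ)).card
          = n.choose ℓ := by
        have : Finset.univ.filter (fun s : Finset (Fin n) => s.card = ℓ)
            = Finset.powersetCard ℓ Finset.univ := by
          rw [Finset.powersetCard_eq_filter, Finset.powerset_univ]
        rw [this, Finset.card_powersetCard, Finset.card_univ, Fintype.card_fin]
      rw [hv1, Finset.card_product, hv2]
      exact Nat.mul_le_mul (Nat.choose_le_pow _ _) (Nat.choose_le_pow _ _)
    -- arithmetic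
    have h4 : 4 * n ^ (4 * ℓ) ≤ 2 ^ (ℓ * ℓ) := by
      have h5 : (4 * n ^ (4 * ℓ)) ^ 5 ≤ (2 ^ (ℓ * ℓ)) ^ 5 := by
        calc (4 * n ^ (4 * ℓ)) ^ 5 = 2 ^ 10 * (n ^ 5) ^ (4 * ℓ) := by
              rw [mul_pow, ← pow_mul, ← pow_mul]
              norm_num
              ring_nf
          _ ≤ 2 ^ 10 * (2 ^ ℓ) ^ (4 * ℓ) :=
              Nat.mul_le_mul_left _ (Nat.pow_le_pow_left hn5 _)
          _ = 2 ^ (10 + ℓ * (4 * ℓ)) := by rw [← pow_mul, ← pow_add]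
          _ ≤ 2 ^ (ℓ * ℓ * 5) := Nat.pow_le_pow_right (by omega) (by nlinarith)
          _ = (2 ^ (ℓ * ℓ)) ^ 5 := by rw [← pow_mul]
      exact (Nat.pow_le_pow_iff_left (by norm_num)).mp h5
    have h6 : n ^ (4 * ℓ) ≤ 2 ^ (ℓ * ℓ - 2) := by
      have he : 2 ^ (ℓ * ℓ) = 4 * 2 ^ (ℓ * ℓ - 2) := by
        have h25 : 25 ≤ ℓ * ℓ := Nat.mul_le_mul hl5 hl5
        have hee : ℓ * ℓ = 2 + (ℓ * ℓ - 2) := by omega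
        rw [hee]
        rw [pow_add]
        norm_num
      rw [he] at h4
      exact Nat.le_of_mul_le_mul_left h4 (by norm_num)
    have hfin : Vld.card * (n ^ (2 * ℓ) * 2 ^ (n * n - ℓ * ℓ)) ≤ 2 ^ (n * n - 2) := by
      calc Vld.card * (n ^ (2 * ℓ) * 2 ^ (n * n - ℓ * ℓ))
          ≤ (n ^ ℓ * n ^ ℓ) * (n ^ (2 * ℓ) * 2 ^ (n * n - ℓ * ℓ)) :=
            Nat.mul_le_mul_right _ hVcard
        _ = n ^ (4 * ℓ) * 2 ^ (n * n - ℓ * ℓ) := by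
            rw [← pow_add, ← mul_assoc, ← pow_add]
            have hee : ℓ + ℓ + 2 * ℓ = 4 * ℓ := by omega
            rw [hee]
        _ ≤ 2 ^ (ℓ * ℓ - 2) * 2 ^ (n * n - ℓ * ℓ) := Nat.mul_le_mul_right _ h6
        _ = 2 ^ (n * n - 2) := by
            rw [← pow_add]
            have hll : ℓ * ℓ ≤ n * n := Nat.mul_le_mul hln hln
            have h25 : 25 ≤ ℓ * ℓ := Nat.mul_le_mul hl5 hl5
            congr 1
            omega
    rw [hA]
    exact le_trans (le_trans step1 (le_of_eq step2)) (le_trans step3 hfin)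
  have hexp : 2 ^ (n * n - 2) < 2 ^ (n * n - 1) := by
    have h4n : 2 * 2 ≤ n * n := Nat.mul_le_mul hn hn
    exact Nat.pow_lt_pow_right (by norm_num) (by omega)
  have hlt : Nat.card {ω : Fin n × Fin n → Bool // ExistsAcyclicKll G ℓ ω}
      < 2 ^ (n * n - 1) := lt_of_le_of_lt key hexp
  rw [hΩ]
  rw [lt_div_iff₀ (by norm_num : (0:ℝ) < 2)]
  have hcast : ((2 ^ (n * n - 1) : ℕ) : ℝ) * 2 = ((2 ^ (n * n) : ℕ) : ℝ) := by
    have h4n : 2 * 2 ≤ n * n := Nat.mul_le_mul hn hn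
    push_cast
    rw [← pow_succ]
    congr 1
    omega
  have h1 : ((Nat.card {ω : Fin n × Fin n → Bool // ExistsAcyclicKll G ℓ ω} : ℕ) : ℝ)
      < ((2 ^ (n * n - 1) : ℕ) : ℝ) := by exact_mod_cast hlt
  linarith
end

section
/- For digraphs G and H, the dichromatic number of the Cartesian product satisfies χ⃗(G □ H) = max{χ⃗(G), χ⃗(H)}. -/
/-- `f` is a proper dicolouring: every colour class induces an acyclic subdigraph. -/
def IsProperDicoloring {V : Type*} (r : V → V → Prop) {k : ℕ} (f : V → Fin k) : Prop :=
  ∀ c, IsAcyclicOn r {v | f v = c}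

def Dicolorable {V : Type*} (r : V → V → Prop) (k : ℕ) : Prop :=
  ∃ f : V → Fin k, IsProperDicoloring r f

noncomputable def dichromaticNumber {V : Type*} (r : V → V → Prop) : ℕ :=
  sInf {k | Dicolorable r k}

/-- The Cartesian product of two digraphs. -/
def cartesianProduct {VG VH : Type*} (G : VG → VG → Prop) (H : VH → VH → Prop)
    (p q : VG × VH) : Prop :=
  (p.1 = q.1 ∧ H p.2 q.2) ∨ (p.2 = q.2 ∧ G p.1 q.1)

lemma zmod_const {m : ℕ} {α : Sort*} (p : ZMod (m+1) → α)
    (h : ∀ i, p (i+1) = p i) : ∀ i, p i = p 0 := by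
  have key : ∀ t : ℕ, p (t : ZMod (m+1)) = p 0 := by
    intro t
    induction t with
    | zero => rw [Nat.cast_zero]
    | succ s ihs => rw [Nat.cast_succ, h, ihs]
  intro i
  have := key (ZMod.val i)
  rwa [ZMod.natCast_val, ZMod.cast_id] at this

lemma acyclic_subsingleton {V : Type*} {r : V → V → Prop} {S : Set V}
    (hirr : Irreflexive r) (hS : S.Subsingleton) : IsAcyclicOn r S := by
  rintro ⟨m, f, hinj, hmem, harc⟩
  have h1 : f (0 + 1) = f 0 := hS (hmem (0+1)) (hmem 0)
  exact hirr (f 0) (h1 ▸ harc 0)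

lemma dicolorable_card {V : Type*} [Fintype V] (r : V → V → Prop)
    (hirr : Irreflexive r) : Dicolorable r (Fintype.card V) := by
  refine ⟨Fintype.equivFin V, fun c => acyclic_subsingleton hirr ?_⟩
  intro v hv w hw
  exact (Fintype.equivFin V).injective (hv.trans hw.symm)

lemma dicolorable_mono {V : Type*} {r : V → V → Prop} {k k' : ℕ}
    (h : Dicolorable r k) (hk : k ≤ k') : Dicolorable r k' := by
  obtain ⟨f, hf⟩ := h
  refine ⟨fun v => Fin.castLE hk (f v), fun c => ?_⟩
  rintro ⟨m, g, hinj, hmem, harc⟩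
  apply hf (f (g 0))
  refine ⟨m, g, hinj, fun i => ?_, harc⟩
  exact Fin.castLE_injective hk ((hmem i : _ = c).trans (hmem 0 : _ = c).symm)

lemma dichromatic_mem {V : Type*} [Fintype V] (r : V → V → Prop)
    (hirr : Irreflexive r) : Dicolorable r (dichromaticNumber r) := by
  have hne : {k | Dicolorable r k}.Nonempty :=
    ⟨Fintype.card V, by exact dicolorable_card r hirr⟩
  exact Nat.sInf_mem hne

lemma dichromatic_pos {V : Type*} [Fintype V] [Nonempty V] (r : V → V → Prop)
    (hirr : Irreflexive r) : 1 ≤ dichromaticNumber r := by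
  by_contra h
  have h0 : dichromaticNumber r = 0 := by omega
  obtain ⟨f, _⟩ := dichromatic_mem r hirr
  rw [h0] at f
  exact (f (Classical.arbitrary V)).elim0

lemma dicolorable_left {VG VH : Type*} [Nonempty VH] {G : VG → VG → Prop}
    {H : VH → VH → Prop} {k : ℕ} (hk : Dicolorable (cartesianProduct G H) k) :
    Dicolorable G k := by
  obtain ⟨F, hF⟩ := hk
  have x₀ : VH := Classical.arbitrary VH
  refine ⟨fun u => F (u, x₀), fun c => ?_⟩
  rintro ⟨m, f, hinj, hmem, harc⟩
  apply hF c
  exact ⟨m, fun i => (f i, x₀), fun i j hij => hinj (congrArg Prod.fst hij),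
    fun i => hmem i, fun i => Or.inr ⟨rfl, harc i⟩⟩

lemma dicolorable_right {VG VH : Type*} [Nonempty VG] {G : VG → VG → Prop}
    {H : VH → VH → Prop} {k : ℕ} (hk : Dicolorable (cartesianProduct G H) k) :
    Dicolorable H k := by
  obtain ⟨F, hF⟩ := hk
  have u₀ : VG := Classical.arbitrary VG
  refine ⟨fun x => F (u₀, x), fun c => ?_⟩
  rintro ⟨m, f, hinj, hmem, harc⟩
  apply hF c
  exact ⟨m, fun i => (u₀, f i), fun i j hij => hinj (congrArg Prod.snd hij),
    fun i => hmem i, fun i => Or.inl ⟨rfl, harc i⟩⟩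

lemma loop_dicycle {V : Type*} {r : V → V → Prop} {S : Set V} {a : V}
    (h : r a a) (ha : a ∈ S) : HasDicycleOn r S := by
  refine ⟨0, fun _ => a, ?_, fun _ => ha, fun _ => h⟩
  intro i j _
  exact Subsingleton.elim (α := Fin 1) i j

lemma walk_dicycle {V : Type*} (r : V → V → Prop) (S : Set V) :
    ∀ n (v : ℕ → V), v n = v 0 → (∀ i < n, v i ∈ S) →
    (∀ i < n, v (i+1) = v i ∨ r (v i) (v (i+1))) →
    (∃ i < n, r (v i) (v (i+1))) → HasDicycleOn r S := by
  intro n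
  induction n using Nat.strong_induction_on with
  | _ n ih =>
  intro v hc hS hstep hgen
  obtain ⟨i₀, hi₀n, hr₀⟩ := hgen
  by_cases hloop : ∃ i < n, v (i+1) = v i ∧ r (v i) (v (i+1))
  · obtain ⟨i, hin, heq, hr⟩ := hloop
    rw [heq] at hr
    exact loop_dicycle hr (hS i hin)
  push_neg at hloop
  by_cases hlazy : ∃ t < n, v (t+1) = v t
  · obtain ⟨t, htn, hlt⟩ := hlazy
    set w : ℕ → V := fun i => if i ≤ t then v i else v (i+1) with hw
    have hn1 : n - 1 < n := by omega
    apply ih (n-1) hn1 w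
    · simp only [hw]
      rw [if_pos (Nat.zero_le t)]
      split_ifs with h1
      · have ht' : t = n - 1 := by omega
        have h2 := hlt
        rw [ht', show n - 1 + 1 = n from by omega] at h2
        rw [← h2]
        exact hc
      · rw [show n - 1 + 1 = n from by omega]
        exact hc
    · intro i hi
      simp only [hw]
      split_ifs with h1
      · exact hS i (by omega)
      · exact hS (i+1) (by omega)
    · intro i hi
      simp only [hw]
      split_ifs with h1 h2
      · exact hstep i (by omega)
      · exact (h2 (by omega)).elim
      · -- i = t
        have hit : i = t := by omega
        subst hit
        have h3 := hstep (i+1) (by omega)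
        rw [hlt] at h3
        exact h3
      · exact hstep (i+1) (by omega)
    · -- genuine step exists
      have hne : i₀ ≠ t := by
        intro h; subst h; exact hloop i₀ hi₀n hlt hr₀
      rcases Nat.lt_or_ge i₀ t with h1 | h1
      · refine ⟨i₀, by omega, ?_⟩
        simp only [hw]
        rw [if_pos (by omega : i₀ ≤ t), if_pos (by omega : i₀ + 1 ≤ t)]
        exact hr₀
      · have h2 : t < i₀ := by omega
        obtain ⟨j, rfl⟩ : ∃ j, i₀ = j + 1 := ⟨i₀ - 1, by omega⟩
        refine ⟨j, by omega, ?_⟩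
        simp only [hw]
        rw [if_neg (by omega : ¬ (j + 1 ≤ t))]
        split_ifs with h3
        · have hjt : j = t := by omega
          subst hjt
          rw [← hlt]
          exact hr₀
        · exact hr₀
  · push_neg at hlazy
    have hallgen : ∀ i < n, r (v i) (v (i+1)) := by
      intro i hi
      rcases hstep i hi with h | h
      · exact absurd h (hlazy i hi)
      · exact h
    have hn2 : 2 ≤ n := by
      rcases Nat.lt_or_ge n 2 with h | h
      · interval_cases n
        · omega
        · exact absurd hc (hlazy 0 (by omega))
      · exact h
    by_cases hinj : ∀ i < n, ∀ j < n, v i = v j → i = j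
    · obtain ⟨m, rfl⟩ : ∃ m, n = m + 1 := ⟨n - 1, by omega⟩
      refine ⟨m, fun i => v (ZMod.val i), ?_, ?_, ?_⟩
      · intro i j hij
        have hi : (ZMod.val i) < m + 1 := ZMod.val_lt i
        have hj : (ZMod.val j) < m + 1 := ZMod.val_lt j
        have h1 := hinj _ hi _ hj hij
        have h2 : ((ZMod.val i : ℕ) : ZMod (m+1)) = ((ZMod.val j : ℕ) : ZMod (m+1)) := by
          rw [h1]
        rwa [ZMod.natCast_val, ZMod.natCast_val, ZMod.cast_id, ZMod.cast_id] at h2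
      · intro i; exact hS _ (ZMod.val_lt i)
      · intro i
        show r (v (ZMod.val i)) (v (ZMod.val (i+1)))
        have hval : ZMod.val (i + 1) = (ZMod.val i + 1) % (m + 1) := by
          conv_lhs => rw [show i = ((ZMod.val i : ℕ) : ZMod (m+1)) by
            rw [ZMod.natCast_val, ZMod.cast_id]]
          rw [show ((ZMod.val i : ℕ) : ZMod (m+1)) + 1 = ((ZMod.val i + 1 : ℕ) : ZMod (m+1)) by
            push_cast; ring]
          exact ZMod.val_natCast _ _
        have hilt := ZMod.val_lt i
        rcases Nat.lt_or_ge (ZMod.val i) m with h | h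
        · rw [hval, Nat.mod_eq_of_lt (by omega)]
          exact hallgen _ (by omega)
        · have him : ZMod.val i = m := by omega
          rw [hval, him, Nat.mod_self, ← hc]
          exact hallgen m (by omega)
    · push_neg at hinj
      have key : ∀ a b, a < b → b < n → v a = v b → HasDicycleOn r S := by
        intro a b hab hbn hvab
        set d := b - a with hd
        have hd1 : 1 ≤ d := by omega
        set w : ℕ → V := fun s => if s ≤ a then v s else v (s + d) with hw
        have hnd : n - d < n := by omega
        apply ih (n - d) hnd w
        · simp only [hw]
          rw [if_pos (Nat.zero_le a), if_neg (by omega : ¬ (n - d ≤ a)),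
            show n - d + d = n from by omega]
          exact hc
        · intro s hs
          simp only [hw]
          split_ifs with h1
          · exact hS s (by omega)
          · exact hS (s + d) (by omega)
        · intro s hs
          simp only [hw]
          split_ifs with h1 h2
          · exact Or.inr (hallgen s (by omega))
          · exact (h2 (by omega)).elim
          · have hsa : s = a := by omega
            subst hsa
            have h3 := hallgen b hbn
            rw [← hvab] at h3
            rw [show s + 1 + d = b + 1 from by omega]
            exact Or.inr h3
          · rw [show s + 1 + d = (s + d) + 1 from by omega]
            exact Or.inr (hallgen (s + d) (by omega))
        · refine ⟨0, by omega, ?_⟩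
          simp only [hw]
          rw [if_pos (Nat.zero_le a)]
          split_ifs with h1
          · exact hallgen 0 (by omega)
          · have ha0 : a = 0 := by omega
            subst ha0
            rw [hvab, show 0 + 1 + d = b + 1 from by omega]
            exact hallgen b hbn
      obtain ⟨i, hin, j, hjn, hvij, hij⟩ := hinj
      rcases Nat.lt_or_ge i j with h | h
      · exact key i j h hjn hvij
      · exact key j i (by omega) hin hvij.symm

lemma product_upper {VG VH : Type*} {G : VG → VG → Prop} {H : VH → VH → Prop}
    (hG : Irreflexive G) (hH : Irreflexive H) {m : ℕ}
    {g : VG → Fin (m+1)} {h : VH → Fin (m+1)}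
    (hg : IsProperDicoloring G g) (hh : IsProperDicoloring H h) :
    Dicolorable (cartesianProduct G H) (m+1) := by
  refine ⟨fun p => g p.1 + h p.2, fun c => ?_⟩
  rintro ⟨n, f, hinj, hmem, harc⟩
  have hstepconst : ∀ i : ZMod (n+1),
      g (f (i+1)).1 = g (f i).1 ∧ h (f (i+1)).2 = h (f i).2 := by
    intro i
    have hcol : g (f i).1 + h (f i).2 = g (f (i+1)).1 + h (f (i+1)).2 :=
      (hmem i : _ = c).trans (hmem (i+1) : _ = c).symm
    rcases harc i with ⟨h1, _⟩ | ⟨h2, hGa⟩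
    · refine ⟨by rw [← h1], ?_⟩
      rw [← h1] at hcol
      exact (add_left_cancel hcol).symm
    · refine ⟨?_, by rw [← h2]⟩
      rw [← h2] at hcol
      exact (add_right_cancel hcol).symm
  have hgconst := zmod_const (fun i => g (f i).1) (fun i => (hstepconst i).1)
  have hhconst := zmod_const (fun i => h (f i).2) (fun i => (hstepconst i).2)
  by_cases hall : ∀ i, (f i).2 = (f (i+1)).2
  · have hGarc : ∀ i, G (f i).1 (f (i+1)).1 := by
      intro i
      rcases harc i with ⟨_, hHa⟩ | ⟨_, hGa⟩
      · rw [← hall i] at hHa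
        exact (hH _ hHa).elim
      · exact hGa
    have hsnd : ∀ i, (f i).2 = (f 0).2 :=
      zmod_const (fun i => (f i).2) (fun i => (hall i).symm)
    apply hg (g (f 0).1)
    refine ⟨n, fun i => (f i).1, ?_, fun i => hgconst i, hGarc⟩
    intro i j hij
    exact hinj (Prod.ext hij ((hsnd i).trans (hsnd j).symm))
  · push_neg at hall
    obtain ⟨i₀, hi₀⟩ := hall
    apply hh (h (f 0).2)
    apply walk_dicycle H {x | h x = h (f 0).2} (n+1)
      (fun t => (f (i₀ + (t : ZMod (n+1)))).2)
    · norm_num [ZMod.natCast_self]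
    · intro t _
      exact hhconst _
    · intro t _
      rw [show ((t+1 : ℕ) : ZMod (n+1)) = (t : ZMod (n+1)) + 1 by push_cast; ring,
        ← add_assoc]
      rcases harc (i₀ + (t : ZMod (n+1))) with ⟨_, hHa⟩ | ⟨hsnd, _⟩
      · exact Or.inr hHa
      · exact Or.inl hsnd.symm
    · refine ⟨0, by omega, ?_⟩
      rw [show ((0:ℕ) : ZMod (n+1)) = 0 by norm_num,
        show ((0+1 : ℕ) : ZMod (n+1)) = 1 by norm_num, add_zero]
      rcases harc i₀ with ⟨_, hHa⟩ | ⟨hsnd, _⟩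
      · exact hHa
      · exact absurd hsnd hi₀

/-- Sabidussi's theorem for digraphs: `χ⃗(G □ H) = max {χ⃗(G), χ⃗(H)}`. -/
theorem dichromaticNumber_cartesianProduct {VG VH : Type*} [Fintype VG] [Fintype VH]
    [Nonempty VG] [Nonempty VH] (G : VG → VG → Prop) (H : VH → VH → Prop)
    (hG : Irreflexive G) (hH : Irreflexive H) :
    dichromaticNumber (cartesianProduct G H) =
      max (dichromaticNumber G) (dichromaticNumber H) := by
  set a := dichromaticNumber G with ha
  set b := dichromaticNumber H with hb
  have ha1 : 1 ≤ a := dichromatic_pos G hG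
  obtain ⟨m, hm⟩ : ∃ m, max a b = m + 1 := ⟨max a b - 1, by omega⟩
  have hGa : Dicolorable G (m+1) :=
    dicolorable_mono (dichromatic_mem G hG) (hm ▸ le_max_left a b)
  have hHb : Dicolorable H (m+1) :=
    dicolorable_mono (dichromatic_mem H hH) (hm ▸ le_max_right a b)
  obtain ⟨g, hg⟩ := hGa
  obtain ⟨h, hh⟩ := hHb
  have hup : Dicolorable (cartesianProduct G H) (max a b) :=
    hm ▸ product_upper hG hH hg hh
  have hub : dichromaticNumber (cartesianProduct G H) ≤ max a b := Nat.sInf_le hup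
  have hmemP : Dicolorable (cartesianProduct G H)
      (dichromaticNumber (cartesianProduct G H)) := by
    have hne : {k | Dicolorable (cartesianProduct G H) k}.Nonempty :=
      ⟨max a b, by exact hup⟩
    exact Nat.sInf_mem hne
  have h1 : a ≤ dichromaticNumber (cartesianProduct G H) :=
    Nat.sInf_le (dicolorable_left hmemP)
  have h2 : b ≤ dichromaticNumber (cartesianProduct G H) :=
    Nat.sInf_le (dicolorable_right hmemP)
  exact le_antisymm hub (max_le h1 h2)
end

section
/- Let G and H be digraphs with N = max{χ⃗(G), χ⃗(H)}, and let f_G, f_H be proper N-colourings of G and H respectively. Then the colouring f(g,h) ≡ f_G(g) + f_H(h) (mod N) is a proper N-colouring of the Cartesian product G □ H, i.e., no colour class of f contains a directed cycle. -/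
lemma closedWalk_dicycle {V : Type*} {r : V → V → Prop} {S : Set V} :
    ∀ L : ℕ, 1 ≤ L → ∀ w : ℕ → V, (∀ i < L, r (w i) (w (i+1))) →
      (∀ i ≤ L, w i ∈ S) → w L = w 0 → HasDicycleOn r S := by
  intro L
  induction L using Nat.strong_induction_on with
  | _ L ih =>
    intro hL w hstep hS hclosed
    by_cases hinj : ∀ i j : ℕ, i < L → j < L → w i = w j → i = j
    · obtain ⟨m, rfl⟩ := Nat.exists_eq_succ_of_ne_zero (by omega : L ≠ 0)
      refine ⟨m, fun k => w k.val, ?_, fun i => hS i.val (le_of_lt i.val_lt), ?_⟩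
      · intro a b hab
        exact ZMod.val_injective _ (hinj a.val b.val a.val_lt b.val_lt hab)
      · intro i
        show r (w i.val) (w ((i+1).val))
        have hc : (i + 1).val = (i.val + 1) % (m + 1) := by
          have : ((i.val + 1 : ℕ) : ZMod (m + 1)) = i + 1 := by
            push_cast [ZMod.natCast_val, ZMod.cast_id]
            ring
          rw [← this, ZMod.val_natCast]
        rcases Nat.lt_or_ge (i.val + 1) (m + 1) with hlt | hge
        · rw [hc, Nat.mod_eq_of_lt hlt]
          exact hstep i.val i.val_lt
        · have hiv : i.val = m := by have := i.val_lt; omega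
          have : (i + 1).val = 0 := by rw [hc, hiv]; simp
          rw [this, ← hclosed]
          have h2 := hstep i.val i.val_lt
          rw [hiv]; rw [hiv] at h2
          exact h2
    · push_neg at hinj
      obtain ⟨i, j, hi, hj, heq, hne⟩ := hinj
      -- wlog i < j
      rcases Nat.lt_or_ge i j with hij | hij
      · exact ih (j - i) (by omega) (by omega) (fun k => w (i + k))
          (fun k hk => by have := hstep (i + k) (by omega); rwa [Nat.add_assoc] at this)
          (fun k hk => hS (i + k) (by omega))
          (by show w (i + (j - i)) = w (i + 0); rw [Nat.add_sub_cancel' (le_of_lt hij)]; rw [Nat.add_zero]; exact heq.symm)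
      · have hij' : j < i := by omega
        exact ih (i - j) (by omega) (by omega) (fun k => w (j + k))
          (fun k hk => by have := hstep (j + k) (by omega); rwa [Nat.add_assoc] at this)
          (fun k hk => hS (j + k) (by omega))
          (by show w (j + (i - j)) = w (j + 0); rw [Nat.add_sub_cancel' (le_of_lt hij')]; rw [Nat.add_zero]; exact heq)

lemma lazyWalk_dicycle {V : Type*} {r : V → V → Prop} {S : Set V} :
    ∀ L : ℕ, ∀ w : ℕ → V, (∀ i < L, w i = w (i+1) ∨ r (w i) (w (i+1))) →
      (∀ i ≤ L, w i ∈ S) → w L = w 0 → (∃ i, i < L ∧ r (w i) (w (i+1))) →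
      HasDicycleOn r S := by
  intro L
  induction L using Nat.strong_induction_on with
  | _ L ih =>
    intro w hstep hS hclosed hex
    obtain ⟨j, hj, hr⟩ := hex
    by_cases heq : ∃ i, i < L ∧ w i = w (i+1)
    · obtain ⟨i, hi, hwi⟩ := heq
      by_cases hri : r (w i) (w (i+1))
      · refine ⟨0, fun _ => w i, fun a b _ => Subsingleton.elim (α := ZMod 1) a b,
          fun _ => hS i (le_of_lt hi), fun _ => ?_⟩
        show r (w i) (w i)
        have h3 := hri
        rw [← hwi] at h3
        exact h3
      · -- splice out the stationary step i
        have hjne : j ≠ i := fun h => hri (h ▸ hr)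
        set w' : ℕ → V := fun k => if k < i then w k else w (k+1) with hw'
        have hval : ∀ k, i ≤ k → w' k = w (k+1) := by
          intro k hk; simp only [hw', if_neg (by omega : ¬ k < i)]
        have hval2 : ∀ k, k < i → w' k = w k := by
          intro k hk; simp only [hw', if_pos hk]
        have hkey : ∀ k, k ≤ i → w' k = w k := by
          intro k hk
          rcases Nat.lt_or_ge k i with h | h
          · exact hval2 k h
          · have : k = i := by omega
            rw [hval k h, this, ← hwi]
        refine ih (L-1) (by omega) w' ?_ ?_ ?_ ?_
        · intro k hk
          rcases Nat.lt_or_ge k i with h | h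
          · rw [hval2 k h, hkey (k+1) (by omega)]
            exact hstep k (by omega)
          · rw [hval k h, hval (k+1) (by omega)]
            exact hstep (k+1) (by omega)
        · intro k hk
          rcases Nat.lt_or_ge k i with h | h
          · rw [hval2 k h]; exact hS k (by omega)
          · rw [hval k h]; exact hS (k+1) (by omega)
        · have h1 : w' (L-1) = w L := by
            rw [hval (L-1) (by omega)]
            congr 1; omega
          rw [h1, hclosed, ← hkey 0 (by omega)]
        · rcases Nat.lt_or_ge j i with h | h
          · refine ⟨j, by omega, ?_⟩
            rw [hval2 j h, hkey (j+1) (by omega)]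
            exact hr
          · have h2 : i < j := by omega
            refine ⟨j-1, by omega, ?_⟩
            rw [hval (j-1) (by omega), hval (j-1+1) (by omega)]
            have e1 : j - 1 + 1 = j := by omega
            rw [e1]
            exact hr
    · push_neg at heq
      exact closedWalk_dicycle L (by omega) w
        (fun i hi => (hstep i hi).resolve_left (heq i hi)) hS hclosed

/-- With `N = max {χ⃗(G), χ⃗(H)}` and proper `N`-colourings `f_G, f_H` of `G, H`,
the colouring `(g,h) ↦ f_G(g) + f_H(h) (mod N)` is a proper `N`-colouring of `G □ H`. -/
theorem sum_mod_coloring_proper {VG VH : Type*} [Fintype VG] [Fintype VH]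
    (G : VG → VG → Prop) (H : VH → VH → Prop) (N : ℕ)
    (hN : N = max (dichromaticNumber G) (dichromaticNumber H))
    (fG : VG → Fin N) (fH : VH → Fin N)
    (hfG : IsProperDicoloring G fG) (hfH : IsProperDicoloring H fH) :
    IsProperDicoloring (cartesianProduct G H) (fun p => fG p.1 + fH p.2) := by
  intro c hcyc
  obtain ⟨m, f, hinj, hmem, hstep⟩ := hcyc
  haveI : NeZero N := ⟨(fG (f 0).1).pos.ne'⟩
  set g : ZMod (m+1) → VG := fun i => (f i).1 with hg
  set h : ZMod (m+1) → VH := fun i => (f i).2 with hh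
  have hcol : ∀ i, fG (g i) + fH (h i) = c := fun i => hmem i
  have hstep' : ∀ i : ZMod (m+1),
      (g i = g (i+1) ∧ H (h i) (h (i+1))) ∨ (h i = h (i+1) ∧ G (g i) (g (i+1))) := hstep
  -- colours constant along the cycle
  have hconst : ∀ i : ZMod (m+1), fG (g i) = fG (g 0) ∧ fH (h i) = fH (h 0) := by
    have key : ∀ k : ℕ, fG (g ↑k) = fG (g 0) ∧ fH (h ↑k) = fH (h 0) := by
      intro k
      induction k with
      | zero => simp
      | succ k ihk =>
        have hcast : ((k+1 : ℕ) : ZMod (m+1)) = (↑k : ZMod (m+1)) + 1 := by push_cast; ring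
        rw [hcast]
        rcases hstep' ↑k with ⟨he, _⟩ | ⟨he, _⟩
        · have h1 : fG (g ((↑k : ZMod (m+1))+1)) = fG (g ↑k) := by rw [← he]
          have h2 : fH (h ((↑k : ZMod (m+1))+1)) = fH (h ↑k) := by
            have := (hcol ↑k).trans (hcol (↑k+1)).symm
            rw [h1] at this
            exact (add_left_cancel this).symm
          exact ⟨h1.trans ihk.1, h2.trans ihk.2⟩
        · have h2 : fH (h ((↑k : ZMod (m+1))+1)) = fH (h ↑k) := by rw [← he]
          have h1 : fG (g ((↑k : ZMod (m+1))+1)) = fG (g ↑k) := by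
            have := (hcol ↑k).trans (hcol (↑k+1)).symm
            rw [h2] at this
            exact (add_right_cancel this).symm
          exact ⟨h1.trans ihk.1, h2.trans ihk.2⟩
    intro i
    have : ((i.val : ℕ) : ZMod (m+1)) = i := by rw [ZMod.natCast_val, ZMod.cast_id]
    rw [← this]
    exact key i.val
  have hclosedG : g ↑(m+1 : ℕ) = g ((0:ℕ) : ZMod (m+1)) := by
    simp [ZMod.natCast_self]
  by_cases hGex : ∃ j : ℕ, j < m + 1 ∧ G (g ↑j) (g (↑j + 1))
  · obtain ⟨j, hj, hGarc⟩ := hGex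
    refine hfG (fG (g 0)) (lazyWalk_dicycle (m+1) (fun k => g ↑k) ?_ ?_ ?_ ?_)
    · intro i hi
      have hcast : ((i+1 : ℕ) : ZMod (m+1)) = (↑i : ZMod (m+1)) + 1 := by push_cast; ring
      show g ↑i = g ↑(i+1) ∨ G (g ↑i) (g ↑(i+1))
      rw [hcast]
      rcases hstep' ↑i with ⟨he, _⟩ | ⟨_, ha⟩
      · exact Or.inl he
      · exact Or.inr ha
    · intro i _
      exact (hconst ↑i).1
    · show g ↑(m+1:ℕ) = g ↑(0:ℕ)
      exact hclosedG
    · refine ⟨j, hj, ?_⟩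
      show G (g ↑j) (g ↑(j+1))
      have hcast : ((j+1 : ℕ) : ZMod (m+1)) = (↑j : ZMod (m+1)) + 1 := by push_cast; ring
      rw [hcast]
      exact hGarc
  · -- no G-arc anywhere: step 0 must be an H-arc
    have h0 := hstep' 0
    rcases h0 with ⟨_, hHarc⟩ | ⟨_, hGarc⟩
    · refine hfH (fH (h 0)) (lazyWalk_dicycle (m+1) (fun k => h ↑k) ?_ ?_ ?_ ?_)
      · intro i hi
        have hcast : ((i+1 : ℕ) : ZMod (m+1)) = (↑i : ZMod (m+1)) + 1 := by push_cast; ring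
        show h ↑i = h ↑(i+1) ∨ H (h ↑i) (h ↑(i+1))
        rw [hcast]
        rcases hstep' ↑i with ⟨_, ha⟩ | ⟨he, _⟩
        · exact Or.inr ha
        · exact Or.inl he
      · intro i _
        exact (hconst ↑i).2
      · show h ↑(m+1:ℕ) = h ↑(0:ℕ)
        simp [ZMod.natCast_self]
      · refine ⟨0, Nat.succ_pos m, ?_⟩
        show H (h ↑(0:ℕ)) (h ↑(0+1:ℕ))
        have hcast : ((0+1 : ℕ) : ZMod (m+1)) = ((0:ℕ) : ZMod (m+1)) + 1 := by push_cast; ring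
        rw [hcast]
        simpa using hHarc
    · exact hGex ⟨0, Nat.succ_pos m, by simpa using hGarc⟩
end

section
/- For integers 2 ≤ k ≤ n/2, the tensor product of complete graphs K_m × K_m with m = ⌊n/k⌋ is isomorphic to an induced subgraph of the Kneser graph KG(n,k). -/
/-- The vertices of the Kneser graph: `k`-element subsets of `[n]`. -/
def KneserVert (n k : ℕ) := {A : Finset (Fin n) // A.card = k}

/-- The Kneser graph `KG(n,k)`: two `k`-sets are adjacent iff they are disjoint. -/
def kneserGraph (n k : ℕ) : SimpleGraph (KneserVert n k) where
  Adj A B := A ≠ B ∧ Disjoint A.1 B.1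
  symm := ⟨fun _ _ h => ⟨h.1.symm, h.2.symm⟩⟩
  loopless := ⟨fun _ h => h.1 rfl⟩

section aux
variable (n k : ℕ)

lemma kn_arith (h2 : 2 ≤ k) (j : Fin (n/k)) (t : ℕ) (ht : t < k - 1) :
    n/k + (j : ℕ) * (k-1) + t < n := by
  have hmk : n/k * k ≤ n := Nat.div_mul_le_self n k
  have h1 : (j:ℕ) < n/k := j.2
  have c1 : (j:ℕ)*(k-1) + t < ((j:ℕ)+1)*(k-1) := by
    rw [add_mul, one_mul]; omega
  have c2 : ((j:ℕ)+1)*(k-1) ≤ (n/k)*(k-1) := Nat.mul_le_mul_right _ (by omega)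
  have c3 : n/k * k = n/k * 1 + n/k * (k-1) := by
    rw [← mul_add]; congr 1; omega
  rw [mul_one] at c3
  omega

def knElem (h2 : 2 ≤ k) (j : Fin (n/k)) (t : Fin (k-1)) : Fin n :=
  ⟨n/k + (j : ℕ) * (k-1) + t, kn_arith n k h2 j t t.2⟩

def knE1 (h2 : 2 ≤ k) (hk : 2 * k ≤ n) (i : Fin (n/k)) : Fin n :=
  ⟨i, by
    have h1 : (i:ℕ) < n/k := i.2
    have hmk : n/k * k ≤ n := Nat.div_mul_le_self n k
    have : n/k ≤ n/k * k := Nat.le_mul_of_pos_right _ (by omega)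
    omega⟩

lemma knElem_inj (h2 : 2 ≤ k) {j j' : Fin (n/k)} {t t' : Fin (k-1)}
    (h : knElem n k h2 j t = knElem n k h2 j' t') : j = j' ∧ t = t' := by
  have h' : (j : ℕ) * (k-1) + t = (j' : ℕ) * (k-1) + t' := by
    have := congrArg (Fin.val) h
    simp only [knElem] at this
    omega
  have ht : (t:ℕ) < k - 1 := t.2
  have ht' : (t':ℕ) < k - 1 := t'.2
  have hj : (j : ℕ) = j' := by
    have e1 : ((j:ℕ) * (k-1) + t) / (k-1) = j := by
      rw [mul_comm, Nat.mul_add_div (by omega : 0 < k-1), Nat.div_eq_of_lt ht]; omega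
    have e2 : ((j':ℕ) * (k-1) + t') / (k-1) = j' := by
      rw [mul_comm, Nat.mul_add_div (by omega : 0 < k-1), Nat.div_eq_of_lt ht']; omega
    rw [← e1, ← e2, h']
  constructor
  · exact Fin.ext hj
  · apply Fin.ext
    have : (j:ℕ) * (k-1) = (j':ℕ) * (k-1) := by rw [hj]
    omega

lemma knE1_ne_elem (h2 : 2 ≤ k) (hk : 2 * k ≤ n) (i j : Fin (n/k)) (t : Fin (k-1)) :
    knE1 n k h2 hk i ≠ knElem n k h2 j t := by
  intro h
  have := congrArg (Fin.val) h
  simp only [knE1, knElem] at this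
  have : (i:ℕ) < n/k := i.2
  omega

def knSet (h2 : 2 ≤ k) (hk : 2 * k ≤ n) (p : Fin (n/k) × Fin (n/k)) : Finset (Fin n) :=
  insert (knE1 n k h2 hk p.1) (Finset.univ.image (knElem n k h2 p.2))

lemma knSet_card (h2 : 2 ≤ k) (hk : 2 * k ≤ n) (p : Fin (n/k) × Fin (n/k)) :
    (knSet n k h2 hk p).card = k := by
  rw [knSet, Finset.card_insert_of_notMem, Finset.card_image_of_injective _
      (fun t t' h => (knElem_inj n k h2 h).2)]
  · simp; omega
  · intro hmem
    obtain ⟨t, -, ht⟩ := Finset.mem_image.mp hmem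
    exact knE1_ne_elem n k h2 hk p.1 p.2 t ht.symm

lemma knSet_mem (h2 : 2 ≤ k) (hk : 2 * k ≤ n) (p : Fin (n/k) × Fin (n/k)) (x : Fin n) :
    x ∈ knSet n k h2 hk p ↔ x = knE1 n k h2 hk p.1 ∨ ∃ t, x = knElem n k h2 p.2 t := by
  simp [knSet, eq_comm]

end aux

/-- The tensor product `K_m × K_m` with `m = ⌊n/k⌋` is isomorphic to an induced
subgraph of `KG(n,k)` for `2 ≤ k ≤ n/2`. -/
theorem tensor_complete_induced_in_kneser (n k : ℕ) (h2 : 2 ≤ k) (hk : 2 * k ≤ n) :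
    ∃ ι : Fin (n / k) × Fin (n / k) → KneserVert n k, Function.Injective ι ∧
      ∀ p q : Fin (n / k) × Fin (n / k),
        (p.1 ≠ q.1 ∧ p.2 ≠ q.2) ↔ (kneserGraph n k).Adj (ι p) (ι q) := by
  have t0 : (0 : ℕ) < k - 1 := by omega
  refine ⟨fun p => ⟨knSet n k h2 hk p, knSet_card n k h2 hk p⟩, ?_, ?_⟩
  · intro p q h
    have h' : knSet n k h2 hk p = knSet n k h2 hk q := congrArg Subtype.val h
    have h1 : knE1 n k h2 hk p.1 ∈ knSet n k h2 hk q := by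
      rw [← h']; rw [knSet_mem]; left; rfl
    have h2' : knElem n k h2 p.2 ⟨0, t0⟩ ∈ knSet n k h2 hk q := by
      rw [← h']; rw [knSet_mem]; right; exact ⟨_, rfl⟩
    rw [knSet_mem] at h1 h2'
    have hp1 : p.1 = q.1 := by
      rcases h1 with h1 | ⟨t, h1⟩
      · have := congrArg Fin.val h1
        simp only [knE1] at this
        exact Fin.ext this
      · exact absurd h1 (knE1_ne_elem n k h2 hk p.1 q.2 t)
    have hp2 : p.2 = q.2 := by
      rcases h2' with h1 | ⟨t, h1⟩
      · exact absurd h1.symm (knE1_ne_elem n k h2 hk q.1 p.2 _)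
      · exact (knElem_inj n k h2 h1).1
    exact Prod.ext hp1 hp2
  · intro p q
    constructor
    · rintro ⟨hp1, hp2⟩
      have hdisj : Disjoint (knSet n k h2 hk p) (knSet n k h2 hk q) := by
        rw [Finset.disjoint_left]
        intro x hx hx'
        rw [knSet_mem] at hx hx'
        rcases hx with rfl | ⟨t, rfl⟩ <;> rcases hx' with h | ⟨t', h⟩
        · have := congrArg Fin.val h
          simp only [knE1] at this
          exact hp1 (Fin.ext this)
        · exact knE1_ne_elem n k h2 hk p.1 q.2 t' h
        · exact knE1_ne_elem n k h2 hk q.1 p.2 t h.symm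
        · exact hp2 (knElem_inj n k h2 h).1
      refine ⟨?_, hdisj⟩
      intro heq
      have h' : knSet n k h2 hk p = knSet n k h2 hk q := congrArg Subtype.val heq
      have hne : knE1 n k h2 hk p.1 ∈ knSet n k h2 hk p := by rw [knSet_mem]; left; rfl
      exact (Finset.disjoint_left.mp hdisj hne (h' ▸ hne)) 
    · rintro ⟨hne, hdisj⟩
      rw [Finset.disjoint_left] at hdisj
      constructor
      · intro h
        apply hdisj (a := knE1 n k h2 hk p.1)
        · rw [knSet_mem]; left; rfl
        · rw [knSet_mem]; left; exact congrArg (knE1 n k h2 hk) h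
      · intro h
        apply hdisj (a := knElem n k h2 p.2 ⟨0, t0⟩)
        · rw [knSet_mem]; right; exact ⟨_, rfl⟩
        · rw [knSet_mem]; right; exact ⟨⟨0, t0⟩, by rw [h]⟩
end
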